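/- Suppose $t, d, u$ are positive integers with $t^2 - du^2 = 1$, $t$ odd, $4 \nmid d$, and $u \neq 0$. Then there exist positive integers $d_1, d_2, u_1, u_2$ with $d = d_1 d_2$, $u = 2 u_1 u_2$, and $d_1 u_1^2 - d_2 u_2^2 = 1$. -/

import Mathlib

/-- Auxiliary: if `a * b = d * v ^ 2` with `a, b` coprime positive naturals,
then `a`, `b` split as `d₁ * u₁ ^ 2` and `d₂ * u₂ ^ 2`. -/
lemma pell_aux (d : ℕ) : ∀ a b v : ℕ, 0 < a → 0 < b → 0 < v → Nat.Coprime a b →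
    a * b = d * v ^ 2 →
    ∃ d₁ d₂ u₁ u₂ : ℕ, 0 < d₁ ∧ 0 < d₂ ∧ 0 < u₁ ∧ 0 < u₂ ∧
      d = d₁ * d₂ ∧ v = u₁ * u₂ ∧ a = d₁ * u₁ ^ 2 ∧ b = d₂ * u₂ ^ 2 := by
  induction d using Nat.strong_induction_on with
  | _ d IH =>
    intro a b v ha hb hv hcop heq
    rcases Nat.eq_zero_or_pos d with rfl | hdpos
    · simp at heq
      rcases heq with h | h <;> omega
    rcases eq_or_ne d 1 with rfl | hd1
    · -- a * b = v ^ 2 with a, b coprime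
      rw [one_mul] at heq
      have hgcd : IsUnit (gcd a b) := by
        rw [Nat.isUnit_iff]
        exact Nat.Coprime.gcd_eq_one hcop
      obtain ⟨w, hw⟩ := exists_associated_pow_of_mul_eq_pow hgcd heq
      have haw : a = w ^ 2 := ((associated_iff_eq).mp hw).symm
      have hw0 : 0 < w := by
        rcases Nat.eq_zero_or_pos w with rfl | h
        · simp [haw] at ha
        · exact h
      have hwv : w ∣ v := by
        have : w ^ 2 ∣ v ^ 2 := ⟨b, by rw [← heq, haw]⟩
        exact (Nat.pow_dvd_pow_iff (by norm_num)).mp this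
      obtain ⟨z, hz⟩ := hwv
      have hz0 : 0 < z := Nat.pos_of_ne_zero (by rintro rfl; simp [hz] at hv)
      have hb' : b = z ^ 2 := by
        have h2 : w ^ 2 * b = w ^ 2 * z ^ 2 := by
          have h3 := heq
          rw [haw, hz] at h3
          rw [h3]; ring
        exact Nat.eq_of_mul_eq_mul_left (by positivity) h2
      exact ⟨1, 1, w, z, one_pos, one_pos, hw0, hz0, by norm_num, hz,
        by rw [haw, one_mul], by rw [hb', one_mul]⟩
    · -- d ≥ 2 : extract a prime factor
      obtain ⟨p, hp, hpd⟩ := Nat.exists_prime_and_dvd hd1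
      obtain ⟨d', hd'⟩ := hpd
      have hd'0 : 0 < d' := by
        rcases Nat.eq_zero_or_pos d' with rfl | h
        · omega
        · exact h
      have hd'lt : d' < d := by
        have := hp.two_le
        nlinarith
      have hpab : p ∣ a * b := by
        rw [heq, hd']
        exact ⟨d' * v ^ 2, by ring⟩
      rcases hp.dvd_mul.mp hpab with hpa | hpb
      · obtain ⟨a', ha'⟩ := hpa
        have ha'0 : 0 < a' := by
          rcases Nat.eq_zero_or_pos a' with rfl | h
          · omega
          · exact h
        have heq' : a' * b = d' * v ^ 2 := by
          have : p * (a' * b) = p * (d' * v ^ 2) := by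
            rw [← mul_assoc, ← ha', heq, hd']; ring
          exact Nat.eq_of_mul_eq_mul_left hp.pos this
        have hcop' : Nat.Coprime a' b :=
          Nat.Coprime.coprime_dvd_left ⟨p, by rw [ha']; ring⟩ hcop
        obtain ⟨d₁, d₂, u₁, u₂, h1, h2, h3, h4, h5, h6, h7, h8⟩ :=
          IH d' hd'lt a' b v ha'0 hb hv hcop' heq'
        exact ⟨p * d₁, d₂, u₁, u₂, Nat.mul_pos hp.pos h1, h2, h3, h4,
          by rw [hd', h5]; ring, h6, by rw [ha', h7]; ring, h8⟩
      · obtain ⟨b', hb'⟩ := hpb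
        have hb'0 : 0 < b' := by
          rcases Nat.eq_zero_or_pos b' with rfl | h
          · omega
          · exact h
        have heq' : a * b' = d' * v ^ 2 := by
          have : p * (a * b') = p * (d' * v ^ 2) := by
            rw [show p * (a * b') = a * (p * b') by ring, ← hb', heq, hd']; ring
          exact Nat.eq_of_mul_eq_mul_left hp.pos this
        have hcop' : Nat.Coprime a b' :=
          Nat.Coprime.coprime_dvd_right ⟨p, by rw [hb']; ring⟩ hcop
        obtain ⟨d₁, d₂, u₁, u₂, h1, h2, h3, h4, h5, h6, h7, h8⟩ :=
          IH d' hd'lt a b' v ha hb'0 hv hcop' heq'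
        exact ⟨d₁, p * d₂, u₁, u₂, h1, Nat.mul_pos hp.pos h2, h3, h4,
          by rw [hd', h5]; ring, h6, h7, by rw [hb', h8]; ring⟩

theorem pell_initial_decomposition_odd (t d u : ℤ)
    (ht : 0 < t) (hd : 0 < d) (hu : 0 < u)
    (hsol : t ^ 2 - d * u ^ 2 = 1) (hto : Odd t) (h4 : ¬ (4 ∣ d)) (hune : u ≠ 0) :
    ∃ d₁ d₂ u₁ u₂ : ℤ, 0 < d₁ ∧ 0 < d₂ ∧ 0 < u₁ ∧ 0 < u₂ ∧
      d = d₁ * d₂ ∧ u = 2 * u₁ * u₂ ∧ d₁ * u₁ ^ 2 - d₂ * u₂ ^ 2 = 1 := by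
  obtain ⟨k, hk⟩ := hto
  -- u is even
  obtain ⟨m, hm⟩ : Even (k * (k + 1)) := Int.even_mul_succ_self k
  have hueven : (2 : ℤ) ∣ u := by
    rcases Int.even_or_odd u with he | ho
    · exact he.two_dvd
    · exfalso
      obtain ⟨j, hj⟩ := ho
      obtain ⟨n, hn⟩ : Even (j * (j + 1)) := Int.even_mul_succ_self j
      apply h4
      refine ⟨2 * (m - d * n), ?_⟩
      subst hk hj
      linear_combination -hsol + 4 * hm - 4 * d * hn
  obtain ⟨v, hv⟩ := hueven
  have hv0 : 0 < v := by omega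
  have hknn : 0 ≤ k := by omega
  have hk0 : 0 < k := by
    nlinarith [mul_pos hd (pow_pos hu 2), hknn]
  have key : (k + 1) * k = d * v ^ 2 := by
    have h4k : 4 * ((k + 1) * k) = 4 * (d * v ^ 2) := by
      subst hk hv
      linear_combination hsol
    linarith
  -- move to ℕ
  lift k to ℕ using hk0.le with K
  lift v to ℕ using hv0.le with V
  lift d to ℕ using hd.le with D
  have keyN : (K + 1) * K = D * V ^ 2 := by exact_mod_cast key
  have hK0 : 0 < K := by exact_mod_cast hk0
  have hV0 : 0 < V := by exact_mod_cast hv0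
  have hcop : Nat.Coprime (K + 1) K := by
    rw [Nat.Coprime, add_comm, Nat.gcd_add_self_left, Nat.gcd_one_left]
  obtain ⟨d₁, d₂, u₁, u₂, h1, h2, h3, h4', h5, h6, h7, h8⟩ :=
    pell_aux D (K + 1) K V (Nat.succ_pos K) hK0 hV0 hcop keyN
  refine ⟨(d₁ : ℤ), (d₂ : ℤ), (u₁ : ℤ), (u₂ : ℤ), by exact_mod_cast h1,
    by exact_mod_cast h2, by exact_mod_cast h3, by exact_mod_cast h4',
    by exact_mod_cast h5, ?_, ?_⟩
  · rw [hv]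
    have : (V : ℤ) = (u₁ : ℤ) * u₂ := by exact_mod_cast h6
    rw [this]; ring
  · have e7 : ((K : ℤ) + 1) = (d₁ : ℤ) * u₁ ^ 2 := by exact_mod_cast h7
    have e8 : (K : ℤ) = (d₂ : ℤ) * u₂ ^ 2 := by exact_mod_cast h8
    rw [← e7, ← e8]; ring
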